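/- Let y : ℝ → ℝ and t₀ ∈ ℝ with y(t₀) + t₀² ≠ 0. Suppose y has derivative −1/(y(t₀) + t₀²) at t₀ — that is, y solves the AIR equation with parameters s₂ = 0, s₁ = 0, s₀ = 1, r₂ = 1, r₁ = 0, r₀ = 0, a₃ = a₂ = a₁ = 0, a₀ = 1. Define u(t) = 1/(y(t) + t²). Then u has derivative u(t₀)³ − 2t₀·u(t₀)² at t₀. Hence Liouville's Class 2 equation y' = y³ − 2xy² is a member of the AIR class. -/

import Mathlib

/-- Liouville's Class 2 equation `y' = y³ − 2xy²` is a member of the AIR class: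
it is obtained from the AIR equation with parameters
`s₂ = 0, s₁ = 0, s₀ = 1, r₂ = 1, r₁ = 0, r₀ = 0, a₃ = a₂ = a₁ = 0, a₀ = 1`
by the change of variables `{x = t, y = 1/u − t²}`, i.e. `u = 1/(y + t²)`. -/
theorem class2_member_of_AIR
    (y : ℝ → ℝ) (t₀ : ℝ)
    (hden : y t₀ + t₀ ^ 2 ≠ 0)
    (hy : HasDerivAt y (-1 / (y t₀ + t₀ ^ 2)) t₀)
    (u : ℝ → ℝ) (hu : u = fun t => 1 / (y t + t ^ 2)) :
    HasDerivAt u ((u t₀) ^ 3 - 2 * t₀ * (u t₀) ^ 2) t₀ := by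
  subst hu
  have h1 : HasDerivAt (fun t => y t + t ^ 2) (-1 / (y t₀ + t₀ ^ 2) + 2 * t₀) t₀ := by
    have h := hy.add (hasDerivAt_pow 2 t₀)
    simp at h
    exact h
  have h2 : HasDerivAt (fun t => (y t + t ^ 2)⁻¹) _ t₀ := h1.inv hden
  simp only [one_div]
  convert h2 using 1
  field_simp
  ring
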